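/- Let T ∈ ℝ^{K×K} be commutative in its truncation and inversion. Then for every b ∈ {2,…,K} and all indices i, j ∈ {1,…,b−1}, the product T_{ib}·T_{bj} = 0; that is, the outer product of the above-diagonal column segment A_b = (T_{1b}, …, T_{(b−1)b}) with the left-of-diagonal row segment B_b = (T_{b1}, …, T_{b(b−1)}) is the zero matrix. -/

import Mathlib

open Matrix BigOperators

/-- The leading principal `b × b` minor of a `K × K` matrix. -/
def leadMinor {K : ℕ} (T : Matrix (Fin K) (Fin K) ℝ) (b : ℕ) (h : b ≤ K) :
    Matrix (Fin b) (Fin b) ℝ :=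
  T.submatrix (Fin.castLE h) (Fin.castLE h)

/-- `T` is commutative in its truncation and inversion: `T` is invertible, each
leading principal minor is invertible, and the leading principal `b × b` minor of
`T⁻¹` equals the inverse of the leading principal `b × b` minor of `T`. -/
def CommTruncInv {K : ℕ} (T : Matrix (Fin K) (Fin K) ℝ) : Prop :=
  IsUnit T ∧ ∀ (b : ℕ) (h : b ≤ K), 1 ≤ b →
    IsUnit (leadMinor T b h) ∧ leadMinor T⁻¹ b h = (leadMinor T b h)⁻¹

/-- If `T` is commutative in its truncation and inversion, then for every
`b ∈ {2,…,K}` (represented by `b : Fin K` with `1 ≤ b`, 1-based index `b+1`) and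
all indices `i, j < b`, the product `T i b * T b j = 0`; i.e. the outer product of
the above-diagonal column segment `A_b` with the left-of-diagonal row segment `B_b`
is the zero matrix. -/
theorem commTruncInv_outer_product_zero
    {K : ℕ} (T : Matrix (Fin K) (Fin K) ℝ) (hT : CommTruncInv T) :
    ∀ b : Fin K, 1 ≤ (b : ℕ) →
      ∀ i j : Fin K, (i : ℕ) < (b : ℕ) → (j : ℕ) < (b : ℕ) →
        T i b * T b j = 0 := by
  intro b hb1 i j hib hjb
  obtain ⟨hTinv, hcomm⟩ := hT
  have hbK : (b:ℕ) < K := b.isLt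
  have hb : (b:ℕ) ≤ K := le_of_lt hbK
  have h1 : (b:ℕ)+1 ≤ K := hbK
  obtain ⟨hU1, hE1⟩ := hcomm ((b:ℕ)+1) h1 (by omega)
  obtain ⟨hU0, hE0⟩ := hcomm (b:ℕ) hb hb1
  have hMN : leadMinor T ((b:ℕ)+1) h1 * leadMinor T⁻¹ ((b:ℕ)+1) h1 = 1 := by
    rw [hE1]; exact Matrix.mul_nonsing_inv _ ((Matrix.isUnit_iff_isUnit_det _).mp hU1)
  have hNM : leadMinor T⁻¹ ((b:ℕ)+1) h1 * leadMinor T ((b:ℕ)+1) h1 = 1 := by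
    rw [hE1]; exact Matrix.nonsing_inv_mul _ ((Matrix.isUnit_iff_isUnit_det _).mp hU1)
  have hNM0 : leadMinor T⁻¹ (b:ℕ) hb * leadMinor T (b:ℕ) hb = 1 := by
    rw [hE0]; exact Matrix.nonsing_inv_mul _ ((Matrix.isUnit_iff_isUnit_det _).mp hU0)
  -- entrywise versions
  have key1 : ∀ p q : Fin ((b:ℕ)+1),
      ∑ k : Fin ((b:ℕ)+1),
          T⁻¹ (Fin.castLE h1 p) (Fin.castLE h1 k) * T (Fin.castLE h1 k) (Fin.castLE h1 q)
        = if p = q then (1:ℝ) else 0 := by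
    intro p q
    have := Matrix.ext_iff.mpr hNM p q
    simpa [Matrix.mul_apply, leadMinor, Matrix.one_apply] using this
  have key2 : ∀ p q : Fin ((b:ℕ)+1),
      ∑ k : Fin ((b:ℕ)+1),
          T (Fin.castLE h1 p) (Fin.castLE h1 k) * T⁻¹ (Fin.castLE h1 k) (Fin.castLE h1 q)
        = if p = q then (1:ℝ) else 0 := by
    intro p q
    have := Matrix.ext_iff.mpr hMN p q
    simpa [Matrix.mul_apply, leadMinor, Matrix.one_apply] using this
  have key3 : ∀ p q : Fin (b:ℕ),
      ∑ k : Fin (b:ℕ),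
          T⁻¹ (Fin.castLE hb p) (Fin.castLE hb k) * T (Fin.castLE hb k) (Fin.castLE hb q)
        = if p = q then (1:ℝ) else 0 := by
    intro p q
    have := Matrix.ext_iff.mpr hNM0 p q
    simpa [Matrix.mul_apply, leadMinor, Matrix.one_apply] using this
  -- cast facts
  have hcast : ∀ k : Fin (b:ℕ), Fin.castLE h1 k.castSucc = Fin.castLE hb k := by
    intro k; ext; simp
  have hlast : Fin.castLE h1 (Fin.last (b:ℕ)) = b := by
    ext; simp
  -- step A : T⁻¹ p b * T b q = 0 for p q < b
  have stepA : ∀ p q : Fin (b:ℕ),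
      T⁻¹ (Fin.castLE hb p) b * T b (Fin.castLE hb q) = 0 := by
    intro p q
    have h := key1 p.castSucc q.castSucc
    rw [Fin.sum_univ_castSucc] at h
    simp only [hcast, hlast] at h
    have h3 := key3 p q
    have : (if p.castSucc = q.castSucc then (1:ℝ) else 0) = if p = q then (1:ℝ) else 0 := by
      simp [Fin.castSucc_inj]
    rw [this, ← h3] at h
    linarith [h]
  -- the row-b / col-b relations from M * N = 1
  have hstar : ∀ p : Fin (b:ℕ),
      ∑ k : Fin (b:ℕ), T (Fin.castLE hb p) (Fin.castLE hb k) * T⁻¹ (Fin.castLE hb k) b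
        + T (Fin.castLE hb p) b * T⁻¹ b b = 0 := by
    intro p
    have h := key2 p.castSucc (Fin.last (b:ℕ))
    rw [Fin.sum_univ_castSucc] at h
    simp only [hcast, hlast] at h
    have hne : p.castSucc ≠ Fin.last (b:ℕ) := by
      simp [Fin.ext_iff]; omega
    rw [if_neg hne] at h
    exact h
  have hstarstar :
      ∑ k : Fin (b:ℕ), T b (Fin.castLE hb k) * T⁻¹ (Fin.castLE hb k) b
        + T b b * T⁻¹ b b = 1 := by
    have h := key2 (Fin.last (b:ℕ)) (Fin.last (b:ℕ))
    rw [Fin.sum_univ_castSucc] at h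
    simp only [hcast, hlast] at h
    simpa using h
  -- d' ≠ 0
  have hd : T⁻¹ b b ≠ 0 := by
    intro hd0
    rw [hd0, mul_zero, add_zero] at hstarstar
    have : ∑ k : Fin (b:ℕ), T b (Fin.castLE hb k) * T⁻¹ (Fin.castLE hb k) b = 0 := by
      apply Finset.sum_eq_zero
      intro k _
      have := stepA k k
      linarith [mul_comm (T b (Fin.castLE hb k)) (T⁻¹ (Fin.castLE hb k) b)]
    rw [this] at hstarstar
    norm_num at hstarstar
  -- finish
  set pi : Fin (b:ℕ) := ⟨(i:ℕ), hib⟩ with hpi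
  set qj : Fin (b:ℕ) := ⟨(j:ℕ), hjb⟩ with hqj
  have hi' : Fin.castLE hb pi = i := by ext; simp [hpi]
  have hj' : Fin.castLE hb qj = j := by ext; simp [hqj]
  have h := hstar pi
  have hmul := congrArg (· * T b (Fin.castLE hb qj)) h
  simp only [add_mul, Finset.sum_mul, zero_mul] at hmul
  have hz : ∑ k : Fin (b:ℕ),
      T (Fin.castLE hb pi) (Fin.castLE hb k) * T⁻¹ (Fin.castLE hb k) b * T b (Fin.castLE hb qj) = 0 := by
    apply Finset.sum_eq_zero
    intro k _
    rw [mul_assoc, stepA k qj, mul_zero]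
  rw [hz, zero_add] at hmul
  have : T (Fin.castLE hb pi) b * T b (Fin.castLE hb qj) * T⁻¹ b b = 0 := by
    ring_nf at hmul ⊢; linarith [hmul]
  rw [hi', hj'] at this
  exact (mul_eq_zero.mp this).resolve_right hd
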